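/- The group with presentation ⟨x2, x3 | x2 = (x2 x3)^{n+1} x3 (x3^{-1} x2^{-1})^{n+1}⟩ is isomorphic to the fundamental group of the complement of the (2, 2n+1) torus knot, i.e., to the group ⟨a, b | a^2 = b^{2n+1}⟩; consequently, for distinct n these groups are pairwise non-isomorphic. -/

import Mathlib

/-- The single relator `x₂⁻¹ · (x₂x₃)^{n+1} x₃ (x₃⁻¹x₂⁻¹)^{n+1}` of the presentation
`⟨x₂, x₃ | x₂ = (x₂x₃)^{n+1} x₃ (x₃⁻¹x₂⁻¹)^{n+1}⟩`, with `x₂ = of 0`, `x₃ = of 1`. -/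
def braidComplementRels (n : ℕ) : Set (FreeGroup (Fin 2)) :=
  {(FreeGroup.of 0)⁻¹ *
    ((FreeGroup.of 0 * FreeGroup.of 1) ^ (n + 1) * FreeGroup.of 1 *
      ((FreeGroup.of 1)⁻¹ * (FreeGroup.of 0)⁻¹) ^ (n + 1))}

/-- The single relator `a² b^{−(2n+1)}` of the torus knot group
`⟨a, b | a² = b^{2n+1}⟩`, with `a = of 0`, `b = of 1`. -/
def torusKnotRels (n : ℕ) : Set (FreeGroup (Fin 2)) :=
  {(FreeGroup.of 0) ^ 2 * ((FreeGroup.of 1) ^ (2 * n + 1))⁻¹}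

open PresentedGroup

lemma torus_rel (n : ℕ) :
    (of 0 : PresentedGroup (torusKnotRels n))^2 * ((of 1)^(2*n+1))⁻¹ = 1 := by
  have h : PresentedGroup.mk (torusKnotRels n)
      ((FreeGroup.of 0) ^ 2 * ((FreeGroup.of 1) ^ (2 * n + 1))⁻¹) = 1 :=
    (QuotientGroup.eq_one_iff _).mpr (Subgroup.subset_normalClosure rfl)
  simpa [map_mul, map_pow, map_inv, PresentedGroup.of] using h

lemma braid_rel (n : ℕ) :
    ((of 0)⁻¹ * ((of 0 * of 1) ^ (n + 1) * of 1 *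
      ((of 1)⁻¹ * (of 0)⁻¹) ^ (n + 1)) : PresentedGroup (braidComplementRels n)) = 1 := by
  have h : PresentedGroup.mk (braidComplementRels n)
      ((FreeGroup.of 0)⁻¹ * ((FreeGroup.of 0 * FreeGroup.of 1) ^ (n + 1) * FreeGroup.of 1 *
      ((FreeGroup.of 1)⁻¹ * (FreeGroup.of 0)⁻¹) ^ (n + 1))) = 1 :=
    (QuotientGroup.eq_one_iff _).mpr (Subgroup.subset_normalClosure rfl)
  simpa [map_mul, map_pow, map_inv, PresentedGroup.of] using h

lemma torus_key {G : Type*} [Group G] (n : ℕ) (a b : G) (h : a^2 * (b^(2*n+1))⁻¹ = 1) :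
    ((b ^ n)⁻¹ * a)⁻¹ * (((b ^ n)⁻¹ * a * (a⁻¹ * b ^ (n + 1))) ^ (n + 1) * (a⁻¹ * b ^ (n + 1)) *
        ((a⁻¹ * b ^ (n + 1))⁻¹ * ((b ^ n)⁻¹ * a)⁻¹) ^ (n + 1)) = 1 := by
  have hu : (b ^ n)⁻¹ * a * (a⁻¹ * b ^ (n + 1)) = b := by
    simp only [pow_succ]; group
  rw [← mul_inv_rev, hu]
  calc ((b ^ n)⁻¹ * a)⁻¹ * (b ^ (n + 1) * (a⁻¹ * b ^ (n + 1)) * (b⁻¹) ^ (n + 1))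
      = a⁻¹ * (a^2 * (b^(2*n+1))⁻¹)⁻¹ * a := by group
    _ = 1 := by rw [h]; group

lemma braid_key {G : Type*} [Group G] (n : ℕ) (x y : G)
    (h : x⁻¹ * ((x*y)^(n+1) * y * ((y⁻¹*x⁻¹))^(n+1)) = 1) :
    ((x*y)^n * x)^2 * ((x*y)^(2*n+1))⁻¹ = 1 := by
  simp only [← mul_inv_rev, inv_pow] at h
  rw [pow_succ] at h
  rw [show ((x*y)^(2*n+1)) = (x*y)^n*((x*y)^n*(x*y)) from by
    rw [show 2*n+1 = (n+n)+1 by ring, pow_succ, pow_add, mul_assoc]]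
  generalize (x*y)^n = c at h ⊢
  calc (c * x)^2 * (c * (c * (x*y)))⁻¹
      = (c*x) * (x⁻¹ * (c * (x*y) * y * (c * (x*y))⁻¹))⁻¹ * (c*x)⁻¹ := by rw [pow_two]; group
    _ = 1 := by rw [h]; group

/-- braid → torus -/
noncomputable def phi (n : ℕ) :
    PresentedGroup (braidComplementRels n) →* PresentedGroup (torusKnotRels n) :=
  PresentedGroup.toGroup (f := ![((of 1 : PresentedGroup (torusKnotRels n))^n)⁻¹ * of 0,
      (of 0 : PresentedGroup (torusKnotRels n))⁻¹ * (of 1)^(n+1)]) <| by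
    rintro r hr
    rw [braidComplementRels, Set.mem_singleton_iff] at hr
    subst hr
    simp only [map_mul, map_pow, map_inv, FreeGroup.lift_apply_of, Matrix.cons_val_zero,
      Matrix.cons_val_one, Matrix.head_cons]
    exact torus_key n _ _ (torus_rel n)

/-- torus → braid -/
noncomputable def psi (n : ℕ) :
    PresentedGroup (torusKnotRels n) →* PresentedGroup (braidComplementRels n) :=
  PresentedGroup.toGroup (f := ![((of 0 : PresentedGroup (braidComplementRels n)) * of 1)^n * of 0,
      (of 0 : PresentedGroup (braidComplementRels n)) * of 1]) <| by
    rintro r hr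
    rw [torusKnotRels, Set.mem_singleton_iff] at hr
    subst hr
    simp only [map_mul, map_pow, map_inv, FreeGroup.lift_apply_of, Matrix.cons_val_zero,
      Matrix.cons_val_one, Matrix.head_cons]
    exact braid_key n _ _ (braid_rel n)

noncomputable def braidTorusEquiv (n : ℕ) :
    PresentedGroup (braidComplementRels n) ≃* PresentedGroup (torusKnotRels n) :=
  MonoidHom.toMulEquiv (phi n) (psi n)
    (by
      ext i
      fin_cases i <;>
        simp only [phi, psi, MonoidHom.comp_apply, MonoidHom.id_apply, PresentedGroup.toGroup.of,
          map_mul, map_pow, map_inv, Matrix.cons_val_zero, Matrix.cons_val_one, Matrix.head_cons,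
          Fin.zero_eta, Fin.mk_one, PresentedGroup.toGroup.of]
      · group
      · simp only [pow_succ]; group)
    (by
      ext i
      fin_cases i <;>
        simp only [phi, psi, MonoidHom.comp_apply, MonoidHom.id_apply, PresentedGroup.toGroup.of,
          map_mul, map_pow, map_inv, Matrix.cons_val_zero, Matrix.cons_val_one, Matrix.head_cons,
          Fin.zero_eta, Fin.mk_one, PresentedGroup.toGroup.of]
      · rw [show ((of 1:PresentedGroup (torusKnotRels n))^n)⁻¹ * of 0 * ((of 0)⁻¹ * of 1^(n+1))
            = of 1 from by simp only [pow_succ]; group]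
        group
      · simp only [pow_succ]; group)
open DihedralGroup

lemma r_pow {q : ℕ} (i : ZMod q) (k : ℕ) : (r i)^k = r ((k : ZMod q) * i) := by
  induction k with
  | zero => simp
  | succ k ih => rw [pow_succ, ih, r_mul_r]; congr 1; push_cast; ring

lemma sr_odd_pow {q : ℕ} (j : ZMod q) (m : ℕ) : (sr j)^(2*m+1) = sr j := by
  induction m with
  | zero => simp
  | succ m ih =>
      rw [show 2*(m+1)+1 = (2*m+1) + 2 by ring, pow_add, ih, pow_two, sr_mul_sr, sr_mul_r]
      simp

/-- subgroup of rotations -/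
def rotSubgroup (q : ℕ) : Subgroup (DihedralGroup q) where
  carrier := {x | ∃ k, x = r k}
  one_mem' := ⟨0, one_def⟩
  mul_mem' := by rintro _ _ ⟨k, rfl⟩ ⟨l, rfl⟩; exact ⟨k + l, rfl⟩
  inv_mem' := by rintro _ ⟨k, rfl⟩; exact ⟨-k, rfl⟩

/-- the subgroup generated by `r i` and `sr j` -/
def dihSubgroup (q : ℕ) (i j : ZMod q) : Subgroup (DihedralGroup q) where
  carrier := {x | match x with
    | .r k => k ∈ AddSubgroup.zmultiples i
    | .sr k => k - j ∈ AddSubgroup.zmultiples i}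
  one_mem' := by
    show (0 : ZMod q) ∈ AddSubgroup.zmultiples i
    exact zero_mem _
  mul_mem' := by
    rintro (k | k) (l | l) hk hl
    · show k + l ∈ AddSubgroup.zmultiples i
      exact add_mem hk hl
    · show l - k - j ∈ AddSubgroup.zmultiples i
      have h2 : l - k - j = (l - j) - k := by ring
      rw [h2]; exact sub_mem hl hk
    · show k + l - j ∈ AddSubgroup.zmultiples i
      have h2 : k + l - j = (k - j) + l := by ring
      rw [h2]; exact add_mem hk hl
    · show l - k ∈ AddSubgroup.zmultiples i
      have h2 : l - k = (l - j) - (k - j) := by ring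
      rw [h2]; exact sub_mem hl hk
  inv_mem' := by
    rintro (k | k) hk
    · show -k ∈ AddSubgroup.zmultiples i
      exact neg_mem hk
    · exact hk

lemma mem_dih_r {q : ℕ} {i j k : ZMod q} :
    r k ∈ dihSubgroup q i j ↔ k ∈ AddSubgroup.zmultiples i := Iff.rfl

lemma mem_dih_sr {q : ℕ} {i j k : ZMod q} :
    sr k ∈ dihSubgroup q i j ↔ k - j ∈ AddSubgroup.zmultiples i := Iff.rfl

lemma mem_rot {q : ℕ} {x : DihedralGroup q} :
    x ∈ rotSubgroup q ↔ ∃ k, x = r k := Iff.rfl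
open DihedralGroup

lemma select (a b : ℕ) (ha : a ≠ 0) (hb : b ≠ 0) (hab : a ≠ b) :
    ∃ q : ℕ, q ≠ 0 ∧ ((q ∣ a ∧ ¬ q ∣ b) ∨ (q ∣ b ∧ ¬ q ∣ a)) := by
  have hfac : a.factorization ≠ b.factorization := by
    intro h
    exact hab (Nat.factorization_inj ha hb h)
  have : ∃ p, a.factorization p ≠ b.factorization p := by
    by_contra h
    push_neg at h
    exact hfac (Finsupp.ext h)
  obtain ⟨p, hp⟩ := this
  have hprime : p.Prime := by
    by_contra hp'
    rw [Nat.factorization_eq_zero_of_not_prime a hp',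
      Nat.factorization_eq_zero_of_not_prime b hp'] at hp
    exact hp rfl
  rcases lt_or_gt_of_ne hp with h | h
  · refine ⟨p ^ (a.factorization p + 1), pow_ne_zero _ hprime.pos.ne', Or.inr ⟨?_, ?_⟩⟩
    · exact (hprime.pow_dvd_iff_le_factorization hb).mpr (by omega)
    · intro hd
      have := (hprime.pow_dvd_iff_le_factorization ha).mp hd
      omega
  · refine ⟨p ^ (b.factorization p + 1), pow_ne_zero _ hprime.pos.ne', Or.inl ⟨?_, ?_⟩⟩
    · exact (hprime.pow_dvd_iff_le_factorization ha).mpr (by omega)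
    · intro hd
      have := (hprime.pow_dvd_iff_le_factorization hb).mp hd
      omega

open DihedralGroup in
lemma exists_surj (n q : ℕ) [NeZero q] (h : q ∣ 2*n+1) :
    ∃ φ : PresentedGroup (torusKnotRels n) →* DihedralGroup q, Function.Surjective φ := by
  have hrel : ∀ w ∈ torusKnotRels n,
      FreeGroup.lift (![(sr 0 : DihedralGroup q), r 1]) w = 1 := by
    rintro w hw
    rw [torusKnotRels, Set.mem_singleton_iff] at hw
    subst hw
    simp only [map_mul, map_pow, map_inv, FreeGroup.lift_apply_of, Matrix.cons_val_zero,
      Matrix.cons_val_one, Matrix.head_cons]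
    rw [pow_two, sr_mul_self, r_one_pow,
      (ZMod.natCast_eq_zero_iff _ _).mpr h, ← one_def]
    simp
  refine ⟨PresentedGroup.toGroup hrel, ?_⟩
  rintro (i | i)
  · refine ⟨PresentedGroup.of 1 ^ i.val, ?_⟩
    rw [map_pow, PresentedGroup.toGroup.of]
    simp only [Matrix.cons_val_one, Matrix.head_cons, Matrix.cons_val_zero, r_one_pow, ZMod.natCast_zmod_val]
  · refine ⟨PresentedGroup.of 0 * PresentedGroup.of 1 ^ i.val, ?_⟩
    rw [map_mul, map_pow, PresentedGroup.toGroup.of, PresentedGroup.toGroup.of]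
    simp only [Matrix.cons_val_zero, Matrix.cons_val_one, Matrix.head_cons, r_one_pow,
      ZMod.natCast_zmod_val, sr_mul_r, zero_add]

open DihedralGroup in
lemma surj_dvd (m q : ℕ) [NeZero q] (φ : PresentedGroup (torusKnotRels m) →* DihedralGroup q)
    (hs : Function.Surjective φ) : q ∣ 2*m+1 := by
  have hAB : (φ (PresentedGroup.of 0))^2 = (φ (PresentedGroup.of 1))^(2*m+1) := by
    have h1 := congrArg φ (torus_rel m)
    simp only [map_mul, map_pow, map_inv, map_one] at h1
    rwa [mul_inv_eq_one] at h1
  rcases hB : φ (PresentedGroup.of 1) with i | i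
  · -- B = r i
    rcases hA : φ (PresentedGroup.of 0) with a | a
    · -- both rotations: contradict surjectivity
      exfalso
      have hmem : ∀ g, φ g ∈ rotSubgroup q := by
        intro g
        have : g ∈ (rotSubgroup q).comap φ := by
          apply PresentedGroup.generated_by
          intro k
          fin_cases k
          · exact Subgroup.mem_comap.mpr ⟨a, hA⟩
          · exact Subgroup.mem_comap.mpr ⟨i, hB⟩
        exact this
      obtain ⟨g, hg⟩ := hs (sr 0)
      obtain ⟨k, hk⟩ := mem_rot.mp (hmem g)
      rw [hg] at hk
      exact nomatch hk
    · -- A = sr a, B = r i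
      rw [hA, hB, pow_two, sr_mul_self, _root_.r_pow, one_def] at hAB
      have hci : ((2*m+1 : ℕ) : ZMod q) * i = 0 := (r.injEq _ _).mp hAB |>.symm
      have hmem : ∀ g, φ g ∈ dihSubgroup q i a := by
        intro g
        have : g ∈ (dihSubgroup q i a).comap φ := by
          apply PresentedGroup.generated_by
          intro k
          fin_cases k
          · refine Subgroup.mem_comap.mpr ?_
            show φ (PresentedGroup.of 0) ∈ dihSubgroup q i a
            rw [hA, mem_dih_sr, sub_self]
            exact zero_mem _
          · refine Subgroup.mem_comap.mpr ?_
            show φ (PresentedGroup.of 1) ∈ dihSubgroup q i a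
            rw [hB, mem_dih_r]
            exact AddSubgroup.mem_zmultiples i
        exact this
      obtain ⟨g, hg⟩ := hs (r 1)
      have h1 : (1 : ZMod q) ∈ AddSubgroup.zmultiples i := by
        have := hmem g
        rw [hg, mem_dih_r] at this
        exact this
      obtain ⟨z, hz⟩ := AddSubgroup.mem_zmultiples_iff.mp h1
      have : ((2*m+1 : ℕ) : ZMod q) = 0 := by
        calc ((2*m+1 : ℕ) : ZMod q) = ((2*m+1 : ℕ) : ZMod q) * 1 := (mul_one _).symm
          _ = ((2*m+1 : ℕ) : ZMod q) * (z • i) := by rw [hz]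
          _ = z • (((2*m+1 : ℕ) : ZMod q) * i) := mul_smul_comm z _ i
          _ = 0 := by rw [hci, smul_zero]
      exact (ZMod.natCast_eq_zero_iff _ _).mp this
  · -- B = sr i : impossible
    exfalso
    rw [hB, sr_odd_pow] at hAB
    rcases hA : φ (PresentedGroup.of 0) with a | a <;> rw [hA] at hAB
    · rw [pow_two, r_mul_r] at hAB
      exact nomatch hAB
    · rw [pow_two, sr_mul_self, one_def] at hAB
      exact nomatch hAB


/-- The group `⟨x₂, x₃ | x₂ = (x₂x₃)^{n+1} x₃ (x₃⁻¹x₂⁻¹)^{n+1}⟩` is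
isomorphic to the fundamental group of the complement of the `(2, 2n+1)` torus knot,
i.e. to `⟨a, b | a² = b^{2n+1}⟩`; consequently, for distinct `n` these groups are
pairwise non-isomorphic. -/
theorem stmt_10 :
    (∀ n : ℕ, Nonempty (PresentedGroup (braidComplementRels n) ≃* PresentedGroup (torusKnotRels n))) ∧
    (∀ m n : ℕ, m ≠ n →
      IsEmpty (PresentedGroup (braidComplementRels m) ≃* PresentedGroup (braidComplementRels n))) := by
  constructor
  · exact fun n => ⟨braidTorusEquiv n⟩
  · intro m n hmn
    constructor
    intro e
    have et : PresentedGroup (torusKnotRels m) ≃* PresentedGroup (torusKnotRels n) :=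
      ((braidTorusEquiv m).symm.trans e).trans (braidTorusEquiv n)
    obtain ⟨q, hq0, hcase⟩ := select (2*m+1) (2*n+1) (by omega) (by omega) (by omega)
    haveI : NeZero q := ⟨hq0⟩
    rcases hcase with ⟨hqm, hqn⟩ | ⟨hqn, hqm⟩
    · obtain ⟨φ, hφ⟩ := exists_surj m q hqm
      exact hqn (surj_dvd n q (φ.comp et.symm.toMonoidHom) (hφ.comp et.symm.surjective))
    · obtain ⟨φ, hφ⟩ := exists_surj n q hqn
      exact hqm (surj_dvd m q (φ.comp et.toMonoidHom) (hφ.comp et.surjective))
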